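/- Let Λ(ρ_A) = Tr_B[U(ρ_A ⊗ I_B/d_B)U†] be the reduced dynamics on A. Then the bipartite OTOC satisfies G_U = 1 − (1/d_A²) Tr[S_{AA'} (Λ ⊗ Λ)(S_{AA'})], where S_{AA'} is the swap on ℂ^{d_A} ⊗ ℂ^{d_A}. -/

import Mathlib

open Matrix Kronecker BigOperators

noncomputable section

/-- The swap `S_{AA'}` of the two `A` factors in `(H_A ⊗ H_B)^{⊗2}`. -/
def SAA (dA dB : ℕ) :
    Matrix ((Fin dA × Fin dB) × (Fin dA × Fin dB)) ((Fin dA × Fin dB) × (Fin dA × Fin dB)) ℂ :=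
  Matrix.of fun p q =>
    if p.1.1 = q.2.1 ∧ p.2.1 = q.1.1 ∧ p.1.2 = q.1.2 ∧ p.2.2 = q.2.2 then 1 else 0

/-- The bipartite OTOC `G_U = 1 − (1/d²) Tr(S_{AA'} U^{⊗2} S_{AA'} U^{†⊗2})`. -/
def Greal (dA dB : ℕ) (U : Matrix (Fin dA × Fin dB) (Fin dA × Fin dB) ℂ) : ℝ :=
  1 - (1 / ((dA * dB : ℝ))^2) *
    (Matrix.trace (SAA dA dB * (U ⊗ₖ U) * SAA dA dB * (Uᴴ ⊗ₖ Uᴴ))).re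

/-- The swap operator on `ℂ^{d_A} ⊗ ℂ^{d_A}`. -/
def swapOp (d : ℕ) : Matrix (Fin d × Fin d) (Fin d × Fin d) ℂ :=
  Matrix.of fun p q => if p.1 = q.2 ∧ p.2 = q.1 then 1 else 0

/-- The reduced dynamics `Λ(ρ_A) = Tr_B[U (ρ_A ⊗ I_B/d_B) U†]` on `A`. -/
def redDyn (dA dB : ℕ) (U : Matrix (Fin dA × Fin dB) (Fin dA × Fin dB) ℂ)
    (ρ : Matrix (Fin dA) (Fin dA) ℂ) : Matrix (Fin dA) (Fin dA) ℂ :=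
  Matrix.of fun a c => ∑ b : Fin dB,
    (U * (ρ ⊗ₖ (((dB : ℂ))⁻¹ • (1 : Matrix (Fin dB) (Fin dB) ℂ))) * Uᴴ) (a, b) (c, b)

/-- The tensor product `Φ ⊗ Ψ` of two linear maps on `d_A × d_A` matrices, acting on
operators over `ℂ^{d_A} ⊗ ℂ^{d_A}`. -/
def tensorOp (dA : ℕ)
    (Φ Ψ : Matrix (Fin dA) (Fin dA) ℂ → Matrix (Fin dA) (Fin dA) ℂ)
    (M : Matrix (Fin dA × Fin dA) (Fin dA × Fin dA) ℂ) :
    Matrix (Fin dA × Fin dA) (Fin dA × Fin dA) ℂ :=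
  Matrix.of fun p q => ∑ e : Fin dA, ∑ f : Fin dA, ∑ e' : Fin dA, ∑ f' : Fin dA,
    Φ (Matrix.single e f 1) p.1 q.1 * Ψ (Matrix.single e' f' 1) p.2 q.2 *
      M (e, e') (f, f')

/-- Auxiliary: the generic term of the fully expanded bipartite-OTOC trace. -/
def Fterm (dA dB : ℕ) (U : Matrix (Fin dA × Fin dB) (Fin dA × Fin dB) ℂ)
    (z : ((Fin dA × Fin dB) × (Fin dA × Fin dB)) × ((Fin dA × Fin dB) × (Fin dA × Fin dB))) : ℂ :=
  U (z.1.2.1, z.1.1.2) (z.2.2.1, z.2.1.2) * U (z.1.1.1, z.1.2.2) (z.2.1.1, z.2.2.2) *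
    (star (U (z.1.1.1, z.1.1.2) (z.2.1.1, z.2.1.2)) *
      star (U (z.1.2.1, z.1.2.2) (z.2.2.1, z.2.2.2)))

/-- Auxiliary: the generic term of the fully expanded reduced-dynamics trace. -/
def Gterm (dA dB : ℕ) (U : Matrix (Fin dA × Fin dB) (Fin dA × Fin dB) ℂ)
    (w : ((Fin dA × Fin dA) × (Fin dA × Fin dA)) × ((Fin dB × Fin dB) × (Fin dB × Fin dB))) : ℂ :=
  U (w.1.1.2, w.2.2.1) (w.1.2.1, w.2.2.2) * (dB : ℂ)⁻¹ *
      star (U (w.1.1.1, w.2.2.1) (w.1.2.2, w.2.2.2)) *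
    (U (w.1.1.1, w.2.1.1) (w.1.2.2, w.2.1.2) * (dB : ℂ)⁻¹ *
      star (U (w.1.1.2, w.2.1.1) (w.1.2.1, w.2.1.2)))

lemma lhs_trace_eq (dA dB : ℕ) (U : Matrix (Fin dA × Fin dB) (Fin dA × Fin dB) ℂ) :
    Matrix.trace (SAA dA dB * (U ⊗ₖ U) * SAA dA dB * (Uᴴ ⊗ₖ Uᴴ)) = ∑ z, Fterm dA dB U z := by
  simp only [Matrix.trace, Matrix.diag, Matrix.mul_apply, SAA, Matrix.of_apply,
    Matrix.kroneckerMap_apply, Matrix.conjTranspose_apply, ite_and, Fintype.sum_prod_type,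
    Finset.sum_ite_eq, Finset.sum_ite_eq', Finset.mem_univ, if_true, ite_mul, zero_mul, one_mul,
    Finset.sum_ite_irrel, Finset.sum_const_zero, mul_ite, mul_zero, mul_one, Fterm]

lemma rhs_trace_eq (dA dB : ℕ) (U : Matrix (Fin dA × Fin dB) (Fin dA × Fin dB) ℂ) :
    Matrix.trace (swapOp dA * tensorOp dA (redDyn dA dB U) (redDyn dA dB U) (swapOp dA)) =
      ∑ w, Gterm dA dB U w := by
  simp only [Matrix.trace, Matrix.diag, Matrix.mul_apply, swapOp, tensorOp, redDyn,
    Matrix.of_apply, Matrix.kroneckerMap_apply, Matrix.conjTranspose_apply,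
    Matrix.single, Matrix.one_apply, Matrix.smul_apply, smul_eq_mul,
    ite_and, Fintype.sum_prod_type,
    Finset.sum_ite_eq, Finset.sum_ite_eq', Finset.mem_univ, if_true, ite_mul, zero_mul, one_mul,
    Finset.sum_ite_irrel, Finset.sum_const_zero, mul_ite, mul_zero, mul_one,
    Finset.sum_mul, Finset.mul_sum, Gterm]

/-- Auxiliary reindexing of the summation variables. -/
def reidx (dA dB : ℕ) :
    (((Fin dA × Fin dA) × (Fin dA × Fin dA)) × ((Fin dB × Fin dB) × (Fin dB × Fin dB))) ≃
      (((Fin dA × Fin dB) × (Fin dA × Fin dB)) × ((Fin dA × Fin dB) × (Fin dA × Fin dB))) where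
  toFun := fun ⟨⟨⟨x, x1⟩, ⟨x2, x3⟩⟩, ⟨⟨x4, x5⟩, ⟨x6, x7⟩⟩⟩ =>
    (((x, x6), (x1, x4)), ((x3, x7), (x2, x5)))
  invFun := fun ⟨⟨⟨a, b⟩, ⟨c, d⟩⟩, ⟨⟨p, q⟩, ⟨r, s⟩⟩⟩ =>
    (((a, c), (r, p)), ((d, s), (b, q)))
  left_inv := fun ⟨⟨⟨_, _⟩, ⟨_, _⟩⟩, ⟨⟨_, _⟩, ⟨_, _⟩⟩⟩ => rfl
  right_inv := fun ⟨⟨⟨_, _⟩, ⟨_, _⟩⟩, ⟨⟨_, _⟩, ⟨_, _⟩⟩⟩ => rfl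

lemma key_sum_eq (dA dB : ℕ) (hB : 0 < dB) (U : Matrix (Fin dA × Fin dB) (Fin dA × Fin dB) ℂ) :
    ∑ w, (dB : ℂ)^2 * Gterm dA dB U w = ∑ z, Fterm dA dB U z := by
  refine Fintype.sum_equiv (reidx dA dB) _ _ ?_
  rintro ⟨⟨⟨x, x1⟩, ⟨x2, x3⟩⟩, ⟨⟨x4, x5⟩, ⟨x6, x7⟩⟩⟩
  have h : (dB : ℂ) ≠ 0 := Nat.cast_ne_zero.mpr hB.ne'
  simp only [Gterm, Fterm, reidx, Equiv.coe_fn_mk]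
  field_simp

/-- The bipartite OTOC in terms of the reduced dynamics:
`G_U = 1 − (1/d_A²) Tr[S_{AA'} (Λ ⊗ Λ)(S_{AA'})]`. -/
theorem otoc_reduced_dynamics (dA dB : ℕ) (hA : 0 < dA) (hB : 0 < dB)
    (U : Matrix (Fin dA × Fin dB) (Fin dA × Fin dB) ℂ)
    (hU : U ∈ Matrix.unitaryGroup (Fin dA × Fin dB) ℂ) :
    Greal dA dB U = 1 - (1 / (dA : ℝ)^2) *
      (Matrix.trace (swapOp dA *
        tensorOp dA (redDyn dA dB U) (redDyn dA dB U) (swapOp dA))).re := by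
  have key : Matrix.trace (SAA dA dB * (U ⊗ₖ U) * SAA dA dB * (Uᴴ ⊗ₖ Uᴴ)) =
      (((dB : ℝ))^2 : ℝ) * Matrix.trace (swapOp dA *
        tensorOp dA (redDyn dA dB U) (redDyn dA dB U) (swapOp dA)) := by
    rw [lhs_trace_eq, rhs_trace_eq, ← key_sum_eq dA dB hB U, Finset.mul_sum]
    push_cast
    rfl
  have hBR : (dB : ℝ) ≠ 0 := Nat.cast_ne_zero.mpr hB.ne'
  have hAR : (dA : ℝ) ≠ 0 := Nat.cast_ne_zero.mpr hA.ne'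
  rw [Greal, key, Complex.re_ofReal_mul]
  field_simp
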